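/- Let (α_i)_{i∈I} be as above (Σ α_i = 1, Σ α_i^{1−ε} < ∞). If f(1 + iv) = 0 for some real v ≠ 0, then α_i^{iv} = 1 for all i ∈ I, i.e. v log α_i ∈ 2πℤ for every i; consequently the set {−log α_i} generates a discrete (cyclic) subgroup of ℝ, so (α_i) is rank one. -/

import Mathlib

/-- If `f(1 + iv) = 0` for some real `v ≠ 0`, where `f(z) = Σ_i α_i^z − 1`, then
`v log α_i ∈ 2πℤ` for every `i`; consequently the set `{−log α_i}` lies in a
cyclic subgroup of `ℝ`, i.e. `(α_i)` is rank one. -/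
theorem zero_on_critical_line_implies_rank_one {I : Type*} [Countable I]
    (α : I → ℝ) (hpos : ∀ i, 0 < α i) (hsum : HasSum α 1)
    (v : ℝ) (hv : v ≠ 0)
    (hzero : (∑' i : I, (α i : ℂ) ^ ((1 : ℂ) + v * Complex.I)) - 1 = 0) :
    (∀ i : I, ∃ k : ℤ, v * Real.log (α i) = 2 * Real.pi * k) ∧
      ∃ c : ℝ, ∀ i : I, ∃ k : ℤ, -Real.log (α i) = k * c := by
  set θ : I → ℝ := fun i => v * Real.log (α i) with hθ
  have hterm : ∀ i, (α i : ℂ) ^ ((1 : ℂ) + v * Complex.I)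
      = (α i : ℂ) * Complex.exp ((θ i) * Complex.I) := by
    intro i
    rw [Complex.cpow_def_of_ne_zero (by exact_mod_cast (hpos i).ne'),
      ← Complex.ofReal_log (hpos i).le, mul_add, mul_one, Complex.exp_add,
      ← Complex.ofReal_exp, Real.exp_log (hpos i)]
    ring_nf
    congr 2; simp only [hθ]; push_cast; ring
  have hre : ∀ i, ((α i : ℂ) ^ ((1 : ℂ) + v * Complex.I)).re = α i * Real.cos (θ i) := by
    intro i; rw [hterm i]; simp [Complex.exp_ofReal_mul_I_re]
  have hsummable : Summable fun i => (α i : ℂ) ^ ((1 : ℂ) + v * Complex.I) := by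
    apply Summable.of_norm
    have : ∀ i, ‖(α i : ℂ) ^ ((1 : ℂ) + v * Complex.I)‖ = α i := by
      intro i
      rw [hterm i, norm_mul, Complex.norm_exp_ofReal_mul_I]
      simp [abs_of_pos (hpos i)]
    simpa [this] using hsum.summable
  have htsum : (∑' i : I, (α i : ℂ) ^ ((1 : ℂ) + v * Complex.I)) = 1 := by
    linear_combination hzero
  have hre_sum : (∑' i, α i * Real.cos (θ i)) = 1 := by
    have := Complex.re_tsum hsummable
    rw [htsum] at this
    simp only [hre] at this
    simpa using this.symm
  have hsc : Summable fun i => α i * Real.cos (θ i) := by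
    have h1 : Summable fun i => ((α i : ℂ) ^ ((1 : ℂ) + v * Complex.I)).re :=
      ⟨_, Complex.hasSum_re hsummable.hasSum⟩
    simpa [hre] using h1
  set g : I → ℝ := fun i => α i * (1 - Real.cos (θ i)) with hg
  have hgs : Summable g := by
    have : g = fun i => α i - α i * Real.cos (θ i) := by ext i; ring
    rw [this]; exact hsum.summable.sub hsc
  have hgnn : ∀ i, 0 ≤ g i := fun i =>
    mul_nonneg (hpos i).le (by linarith [Real.cos_le_one (θ i)])
  have hgsum : (∑' i, g i) = 0 := by
    have : (∑' i, g i) = (∑' i, α i) - (∑' i, α i * Real.cos (θ i)) := by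
      rw [← Summable.tsum_sub hsum.summable hsc]
      congr 1; ext i; ring
    rw [this, hsum.tsum_eq, hre_sum]; ring
  have hcos : ∀ i, Real.cos (θ i) = 1 := by
    intro i
    have hle : g i ≤ 0 := hgsum ▸ Summable.le_tsum hgs i (fun j _ => hgnn j)
    have : g i = 0 := le_antisymm hle (hgnn i)
    have := mul_eq_zero.mp this
    rcases this with h | h
    · exact absurd h (hpos i).ne'
    · linarith
  have hmain : ∀ i : I, ∃ k : ℤ, v * Real.log (α i) = 2 * Real.pi * k := by
    intro i
    obtain ⟨n, hn⟩ := Real.cos_eq_one_iff (θ i) |>.mp (hcos i)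
    have hn' : (n : ℝ) * (2 * Real.pi) = v * Real.log (α i) := hn
    exact ⟨n, by linarith⟩
  refine ⟨hmain, ⟨2 * Real.pi / v, fun i => ?_⟩⟩
  obtain ⟨k, hk⟩ := hmain i
  refine ⟨-k, ?_⟩
  have : Real.log (α i) = 2 * Real.pi * k / v := by
    field_simp at hk ⊢; linarith
  rw [this]; push_cast; ring
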